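/- arXiv:1705.10465 — 3 statements merged into one kernel-verified Lean document; each statement's English description precedes it below -/
import Mathlib

section
/- Let q be a prime power, n ≥ 2, and let S ⊆ 𝔽_q^n \ {0} be a union of lines through the origin (each minus the origin), each line meeting H₀ only in 0, with S nonempty. Then the chromatic number of the Cayley graph Cay(𝔽_q^n, S) equals q. -/
/-- The Cayley graph of an additive group with connection set `S`:
`u ~ v` iff `u ≠ v` and `u - v ∈ S` (symmetrized). For symmetric `S`
with `0 ∉ S` this is the usual Cayley graph. -/
def Cay {V : Type*} [AddCommGroup V] (S : Set V) : SimpleGraph V where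
  Adj u v := u ≠ v ∧ (u - v ∈ S ∨ v - u ∈ S)
  symm := ⟨fun u v h => ⟨h.1.symm, h.2.symm⟩⟩
  loopless := ⟨fun u h => h.1 rfl⟩

/-- if `S ⊆ 𝔽_q^n \ {0}` is a nonempty union of punctured lines through
the origin, each line meeting `H₀` only in `0`, then `χ(Cay(𝔽_q^n, S)) = q`. -/
theorem stmt1 (F : Type*) [Field F] [Fintype F] (n : ℕ) (hn : 2 ≤ n)
    (S : Set (Fin n → F)) (h0 : (0 : Fin n → F) ∉ S) (hne : S.Nonempty)
    (hscal : ∀ v ∈ S, ∀ c : F, c ≠ 0 → c • v ∈ S)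
    (hH0 : ∀ v ∈ S, v ⟨n - 1, by omega⟩ ≠ 0) :
    (Cay S).chromaticNumber = Fintype.card F := by
  classical
  set i : Fin n := ⟨n - 1, by omega⟩
  -- upper bound: color by last coordinate
  have C : (Cay S).Coloring F := by
    refine SimpleGraph.Coloring.mk (fun v => v i) ?_
    rintro u v ⟨hne', hmem⟩ hcol
    have key : ∀ w ∈ S, w = u - v ∨ w = v - u → False := by
      intro w hw _
      exact hH0 w hw (by
        rcases ‹w = u - v ∨ w = v - u› with rfl | rfl <;>
          simp [Pi.sub_apply, hcol])
    rcases hmem with h | h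
    · exact key _ h (Or.inl rfl)
    · exact key _ h (Or.inr rfl)
  have hub : (Cay S).chromaticNumber ≤ Fintype.card F := C.colorable.chromaticNumber_le
  -- lower bound: clique from a line
  obtain ⟨v0, hv0⟩ := hne
  have hv0ne : v0 i ≠ 0 := hH0 v0 hv0
  have hinj : Function.Injective (fun c : F => c • v0) := by
    intro a b hab
    have : a * v0 i = b * v0 i := congrFun hab i
    exact mul_right_cancel₀ hv0ne this
  set s : Finset (Fin n → F) := Finset.image (fun c : F => c • v0) Finset.univ with hs
  have hclique : (Cay S).IsClique (s : Set (Fin n → F)) := by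
    rintro x hx y hy hxy
    simp only [hs, Finset.coe_image, Set.mem_image] at hx hy
    obtain ⟨a, -, rfl⟩ := hx
    obtain ⟨b, -, rfl⟩ := hy
    refine ⟨hxy, Or.inl ?_⟩
    have hab : a - b ≠ 0 := sub_ne_zero.mpr (fun h => hxy (by rw [h]))
    have := hscal v0 hv0 (a - b) hab
    rwa [sub_smul] at this
  have hcard : s.card = Fintype.card F := by
    rw [hs, Finset.card_image_of_injective _ hinj, Finset.card_univ]
  have hlb := hclique.card_le_chromaticNumber
  rw [hcard] at hlb
  exact le_antisymm hub hlb
end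

section
/- Let G be a finite permutation group on a set Ω containing a regular abelian subgroup A that is self-normalizing and proper in G. Then |Ω| is not a prime power. -/
open MulAction Subgroup Equiv


/-- Dobson, Theorem 4.2: a finite permutation group `G` on `Ω` with a
proper, self-normalizing, regular abelian subgroup `A` forces `|Ω|` not to be a prime
power. -/
theorem stmt7 (Ω : Type*) [Finite Ω] (G A : Subgroup (Equiv.Perm Ω))
    (hAG : A < G)
    (htrans : ∀ x y : Ω, ∃ a ∈ A, a x = y)
    (hfree : ∀ a ∈ A, (∃ x : Ω, a x = x) → a = 1)
    (habel : ∀ a ∈ A, ∀ b ∈ A, a * b = b * a)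
    (hselfnorm : ∀ g ∈ G, (∀ a ∈ A, g * a * g⁻¹ ∈ A) → g ∈ A) :
    ¬ IsPrimePow (Nat.card Ω) := by
  classical
  rintro ⟨p, k, hp, hk, hcard⟩
  replace hp : p.Prime := Nat.prime_iff.mpr hp
  haveI : Fact p.Prime := ⟨hp⟩
  have hΩpos : 0 < Nat.card Ω := hcard ▸ pow_pos hp.pos k
  have hne : Nonempty Ω := Nat.card_pos_iff.mp hΩpos |>.1
  obtain ⟨x₀⟩ := hne
  -- |A| = |Ω|
  have hbij : Function.Bijective (fun a : ↥A => (a : Equiv.Perm Ω) x₀) := by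
    constructor
    · rintro ⟨a, ha⟩ ⟨b, hb⟩ hab
      simp only at hab
      have hmem : b⁻¹ * a ∈ A := A.mul_mem (A.inv_mem hb) ha
      have : b⁻¹ * a = 1 := hfree _ hmem ⟨x₀, by simp [Equiv.Perm.mul_apply, hab]⟩
      have := eq_of_inv_mul_eq_one this
      exact Subtype.ext this.symm
    · intro y
      obtain ⟨a, ha, hax⟩ := htrans x₀ y
      exact ⟨⟨a, ha⟩, hax⟩
  have hcardA : Nat.card ↥A = Nat.card Ω := Nat.card_eq_of_bijective _ hbij
  -- A as a subgroup of G
  set A' : Subgroup ↥G := A.subgroupOf G with hA'def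
  have hA'card : Nat.card ↥A' = p ^ k := by
    have : Nat.card ↥A' = Nat.card ↥A :=
      Nat.card_congr (Subgroup.subgroupOfEquivOfLe hAG.le).toEquiv
    rw [this, hcardA, ← hcard]
  have hpA : IsPGroup p ↥A' := IsPGroup.of_card hA'card
  obtain ⟨P, hAP⟩ := hpA.exists_le_sylow
  -- A' is self-normalizing in G
  have hnorm : ∀ g : ↥G, g ∈ normalizer (A' : Set ↥G) → g ∈ A' := by
    intro g hg
    rw [Subgroup.mem_normalizer_iff] at hg
    have hgA : (g : Equiv.Perm Ω) ∈ A := by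
      refine hselfnorm g g.2 (fun a ha => ?_)
      have := (hg ⟨a, hAG.le ha⟩).mp (by simpa [hA'def, Subgroup.mem_subgroupOf] using ha)
      simpa [hA'def, Subgroup.mem_subgroupOf] using this
    simpa [hA'def, Subgroup.mem_subgroupOf] using hgA
  -- A' = P
  have hAPeq : A' = (P : Subgroup ↥G) := by
    rcases hAP.lt_or_eq with hlt | heq
    · exfalso
      haveI := P.isPGroup'.isNilpotent
      have hnc : NormalizerCondition ↥(P : Subgroup ↥G) :=
        normalizerCondition_of_isNilpotent
      have hlt' : A'.subgroupOf P < ⊤ := by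
        rw [lt_top_iff_ne_top]
        intro htop
        exact hlt.not_ge (Subgroup.subgroupOf_eq_top.mp htop)
      obtain ⟨g, hgn, hgk⟩ := SetLike.exists_of_lt (hnc _ hlt')
      rw [Subgroup.mem_normalizer_iff] at hgn
      have hgA : ((g : ↥G) : Equiv.Perm Ω) ∈ A := by
        refine hselfnorm _ (g : ↥G).2 (fun a ha => ?_)
        have haP : (⟨a, hAG.le ha⟩ : ↥G) ∈ (P : Subgroup ↥G) :=
          hAP (by simpa [hA'def, Subgroup.mem_subgroupOf] using ha)
        have hmem : (⟨⟨a, hAG.le ha⟩, haP⟩ : ↥(P : Subgroup ↥G)) ∈ A'.subgroupOf P := by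
          simpa [hA'def, Subgroup.mem_subgroupOf] using ha
        have := (hgn _).mp hmem
        simpa [hA'def, Subgroup.mem_subgroupOf] using this
      exact hgk (by simpa [hA'def, Subgroup.mem_subgroupOf] using hgA)
    · exact heq
  -- Burnside's normal p-complement theorem applies
  have hPnc : normalizer ((P : Subgroup ↥G) : Set ↥G) ≤ Subgroup.centralizer ((P : Subgroup ↥G) : Set ↥G) := by
    intro g hg
    have hgA : g ∈ A' := hnorm g (by rwa [hAPeq])
    rw [Subgroup.mem_centralizer_iff]
    intro h hh
    have hhA : h ∈ A' := by rw [hAPeq]; exact hh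
    have := habel _ (by simpa [hA'def, Subgroup.mem_subgroupOf] using hhA)
      _ (by simpa [hA'def, Subgroup.mem_subgroupOf] using hgA)
    exact Subtype.ext this
  set N : Subgroup ↥G := (MonoidHom.transferSylow P hPnc).ker with hNdef
  have hcompl : N.IsComplement' P := MonoidHom.ker_transferSylow_isComplement' P hPnc
  have hNp : ¬ p ∣ Nat.card ↥N := MonoidHom.not_dvd_card_ker_transferSylow P hPnc
  have hNnormal : N.Normal := MonoidHom.normal_ker _
  clear hNdef
  clear_value N
  -- push N down into Perm Ω
  set N' : Subgroup (Equiv.Perm Ω) := N.map G.subtype with hN'def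
  have hN'card : Nat.card ↥N' = Nat.card ↥N :=
    (Nat.card_congr (Subgroup.equivMapOfInjective N G.subtype G.subtype_injective).toEquiv).symm
  have hconjN : ∀ g ∈ G, ∀ n ∈ N', g * n * g⁻¹ ∈ N' := by
    intro g hg n hn
    obtain ⟨m, hm, rfl⟩ := hn
    exact ⟨⟨g, hg⟩ * m * ⟨g, hg⟩⁻¹, hNnormal.conj_mem m hm ⟨g, hg⟩, rfl⟩
  -- all N'-orbits have the same cardinality
  have hle : ∀ x y : Ω, Nat.card (orbit ↥N' x) ≤ Nat.card (orbit ↥N' y) := by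
    intro x y
    obtain ⟨a, ha, hax⟩ := htrans x y
    refine Nat.card_le_card_of_injective
      (fun z => ⟨a z.1, ?_⟩) ?_
    · obtain ⟨n, hn⟩ := z.2
      refine ⟨⟨a * (n : Equiv.Perm Ω) * a⁻¹, hconjN a (hAG.le ha) _ n.2⟩, ?_⟩
      simp only [Subgroup.smul_def, Equiv.Perm.smul_def] at hn ⊢
      simp only [Equiv.Perm.mul_apply, ← hax]
      rw [show ∀ w, a⁻¹ (a w) = w from a.symm_apply_apply, hn]
    · intro z w hzw
      have := congrArg Subtype.val hzw
      simp only at this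
      exact Subtype.ext (a.injective this)
  have horb : ∀ x y : Ω, Nat.card (orbit ↥N' x) = Nat.card (orbit ↥N' y) :=
    fun x y => le_antisymm (hle x y) (hle y x)
  -- counting
  haveI : Fintype Ω := Fintype.ofFinite Ω
  obtain ⟨s, hsdef⟩ : ∃ s, s = Nat.card (orbit ↥N' x₀) := ⟨_, rfl⟩
  have hsum : Nat.card Ω = Nat.card (orbitRel.Quotient ↥N' Ω) * s := by
    have e := MulAction.selfEquivSigmaOrbits ↥N' Ω
    rw [Nat.card_congr e]
    rw [Nat.card_eq_fintype_card, Fintype.card_sigma]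
    have hall : ∀ ω : orbitRel.Quotient ↥N' Ω,
        Fintype.card (orbit ↥N' (Quotient.out ω)) = s := by
      intro ω
      rw [← Nat.card_eq_fintype_card, hsdef]
      exact horb _ _
    rw [Finset.sum_congr rfl (fun ω _ => hall ω), Finset.sum_const, Finset.card_univ,
      smul_eq_mul, Nat.card_eq_fintype_card]
  have hsdvd1 : s ∣ p ^ k := by
    rw [hcard, hsum]
    exact Dvd.intro_left _ rfl
  have hsdvd2 : s ∣ Nat.card ↥N := by
    have h2 := MulAction.card_orbit_mul_card_stabilizer_eq_card_group ↥N' x₀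
    have h3 : s = Fintype.card (orbit ↥N' x₀) := by rw [hsdef, Nat.card_eq_fintype_card]
    rw [← hN'card, Nat.card_eq_fintype_card, ← h2, h3]
    exact dvd_mul_right _ _
  -- hence s = 1
  have hs1 : s = 1 := by
    obtain ⟨j, hj, hsj⟩ := (Nat.dvd_prime_pow hp).mp hsdvd1
    rcases Nat.eq_zero_or_pos j with rfl | hjpos
    · simpa using hsj
    · exact absurd (dvd_trans (dvd_pow_self p hjpos.ne') (hsj ▸ hsdvd2)) hNp
  -- so N acts trivially, hence N = ⊥
  have hNbot : N = ⊥ := by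
    rw [eq_bot_iff]
    intro m hm
    have hm1 : (m : Equiv.Perm Ω) = 1 := by
      ext x
      have hx : Nat.card (orbit ↥N' x) = 1 := by rw [horb x x₀, ← hsdef, hs1]
      haveI := Nat.card_eq_one_iff_unique.mp hx |>.1
      have h1 : (⟨(m : Equiv.Perm Ω), ⟨m, hm, rfl⟩⟩ : ↥N') • x ∈ orbit ↥N' x := mem_orbit _ _
      have h2 : x ∈ orbit ↥N' x := mem_orbit_self x
      have := Subsingleton.elim (⟨_, h1⟩ : orbit ↥N' x) ⟨x, h2⟩
      have := congrArg Subtype.val this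
      simpa [Subgroup.smul_def, Equiv.Perm.smul_def] using this
    rw [Subgroup.mem_bot]
    exact Subtype.ext hm1
  -- conclude A = G, contradiction
  rw [hNbot] at hcompl
  have hPtop : (P : Subgroup ↥G) = ⊤ := Subgroup.isComplement'_bot_left.mp hcompl
  have hGA : G ≤ A := Subgroup.subgroupOf_eq_top.mp (by rw [← hA'def]; exact hAPeq.trans hPtop)
  exact hAG.not_ge hGA
end

section
/- Let q > 2 be a prime power, n ≥ 2, S ⊆ 𝔽_q^n \ {0} a symmetric set closed under nonzero scalar multiplication such that Aut(Cay(𝔽_q^n, S)) = 𝔽_q^n ⋊ 𝔽_q^* and such that some proper q-coloring of Cay(𝔽_q^n, S) exists. Suppose C₀,...,C_{q-1} is a proper q-coloring, and define a (q+1)-coloring by removing 0 from its class and giving it a new color. If every non-identity automorphism x ↦ λx + b that fixes all classes of the new coloring must satisfy b = 0, and x and λx are never in the same original color class unless λ = 1 (hypothesis: each Cᵢ is a coset of a hyperplane not containing any x and λx simultaneously for λ ≠ 1, x ≠ 0), then the new (q+1)-coloring is proper and distinguishing; hence χ_D(Cay(𝔽_q^n, S)) ≤ q + 1. -/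
/-- The distinguishing chromatic number. -/
noncomputable def chiD {V : Type*} (G : SimpleGraph V) : ℕ :=
  sInf {r : ℕ | ∃ c : G.Coloring (Fin r),
    ∀ φ : G ≃g G, (∀ v, c (φ v) = c v) → ∀ v, φ v = v}

/-- `q > 2`, `S` a union of punctured lines avoiding the hyperplane `H₀`,
the automorphism group of `Cay(𝔽_q^n, S)` consists of the affine maps `x ↦ lam • x + b`.
The original proper `q`-coloring has as classes the cosets of `H₀` (the class of `x` is
determined by `x_last / v_last` for a fixed `v ∈ S` with nonzero last coordinate); the
modified `(q+1)`-coloring `c'` recolors the vertex `0` with a brand-new color. Then `c'`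
is proper and distinguishing, and hence `χ_D(Cay(𝔽_q^n, S)) ≤ q + 1`. -/
theorem stmt18 (F : Type*) [Field F] [Fintype F] [DecidableEq F] (n : ℕ) (hn : 2 ≤ n)
    (hq : 2 < Fintype.card F)
    (S : Set (Fin n → F)) (h0 : ∀ s ∈ S, s ≠ 0)
    (hscal : ∀ s ∈ S, ∀ c : F, c ≠ 0 → c • s ∈ S)
    (hAut : ∀ φ : Cay S ≃g Cay S,
      ∃ (lam : F) (b : Fin n → F), lam ≠ 0 ∧ ∀ x, φ x = lam • x + b)
    (v : Fin n → F) (hv : v ∈ S) (hvlast : v ⟨n - 1, by omega⟩ ≠ 0)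
    (hH0S : ∀ s ∈ S, s ⟨n - 1, by omega⟩ ≠ 0)
    (c' : (Fin n → F) → Option F)
    (hc' : ∀ x : Fin n → F, c' x =
      if x = 0 then none
      else some (x ⟨n - 1, by omega⟩ / v ⟨n - 1, by omega⟩)) :
    (∀ x y : Fin n → F, (Cay S).Adj x y → c' x ≠ c' y) ∧
    (∀ φ : Cay S ≃g Cay S, (∀ x, c' (φ x) = c' x) → ∀ x, φ x = x) ∧
    chiD (Cay S) ≤ Fintype.card F + 1 := by
  set i : Fin n := ⟨n - 1, by omega⟩ with hi
  -- key: adjacent vertices differ in coordinate i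
  have hadj : ∀ x y : Fin n → F, (Cay S).Adj x y → x i ≠ y i := by
    intro x y hxy
    rcases hxy.2 with hs | hs
    · have := hH0S _ hs
      simpa [sub_eq_zero] using this
    · have := hH0S _ hs
      intro h
      exact this (by simp [h, sub_eq_zero])
  have hproper : ∀ x y : Fin n → F, (Cay S).Adj x y → c' x ≠ c' y := by
    intro x y hxy
    have hne := hadj x y hxy
    rw [hc' x, hc' y]
    by_cases hx : x = 0
    · have hy : y ≠ 0 := by
        intro hy; exact hne (by simp [hx, hy])
      simp [hx, hy]
    · by_cases hy : y = 0
      · simp [hx, hy]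
      · rw [if_neg hx, if_neg hy]
        intro h
        exact hne ((div_left_inj' hvlast).mp (Option.some_inj.mp h))
  have hdist : ∀ φ : Cay S ≃g Cay S, (∀ x, c' (φ x) = c' x) → ∀ x, φ x = x := by
    intro φ hfix x
    obtain ⟨lam, b, hlam, hφ⟩ := hAut φ
    -- φ 0 = 0
    have h0' : φ (0 : Fin n → F) = 0 := by
      have := hfix 0
      rw [hc' (φ 0), hc' 0] at this
      simp only [if_pos rfl] at this
      by_contra hne
      rw [if_neg hne] at this
      exact Option.some_ne_none _ this
    have hb : b = 0 := by
      have := hφ 0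
      rw [h0'] at this
      simpa using this.symm
    -- use v to show lam = 1
    have hv0 : v ≠ 0 := h0 _ hv
    have hφv : φ v = lam • v := by rw [hφ, hb, add_zero]
    have hlv : lam • v ≠ 0 := by
      simp [smul_eq_zero, hlam, hv0]
    have := hfix v
    rw [hφv, hc' (lam • v), hc' v, if_neg hlv, if_neg hv0, Option.some_inj] at this
    have hlv_i : (lam • v) i = lam * v i := rfl
    rw [hlv_i] at this
    have hlam1 : lam = 1 := by
      field_simp at this
      exact this
    rw [hφ, hb, hlam1, one_smul, add_zero]
  refine ⟨hproper, hdist, ?_⟩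
  -- build a coloring into Fin (card F + 1)
  have hcard : Fintype.card (Option F) = Fintype.card F + 1 := by simp
  let e : Option F ≃ Fin (Fintype.card F + 1) := Fintype.equivFinOfCardEq hcard
  have : (Fintype.card F + 1) ∈ {r : ℕ | ∃ c : (Cay S).Coloring (Fin r),
      ∀ φ : Cay S ≃g Cay S, (∀ v, c (φ v) = c v) → ∀ v, φ v = v} := by
    refine ⟨SimpleGraph.Coloring.mk (fun x => e (c' x)) ?_, ?_⟩
    · intro x y hxy h
      exact hproper x y hxy (e.injective h)
    · intro φ hfix
      exact hdist φ (fun x => e.injective (hfix x))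
  exact Nat.sInf_le this
end
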